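/- For every k ∈ {1,…,6}, every integer n ≥ 1, and every z ∈ ℂ with |z| ≤ 1, the map φ_{k,n} is holomorphic at z and its complex derivative satisfies |φ_{k,n}′(z)| ≤ 3 × 1.28 / n² = 3.84/n². -/

import Mathlib

open Complex

/-- The Möbius map `f(z) = ((√3 − 1)z + 1)/(−z + √3 + 1)`. -/
noncomputable def apollonianF (z : ℂ) : ℂ :=
  ((Real.sqrt 3 - 1) * z + 1) / (-z + Real.sqrt 3 + 1)

/-- The rotation `R_θ(z) = e^{iθ} z`. -/
noncomputable def rot (θ : ℝ) (z : ℂ) : ℂ := Complex.exp (θ * I) * z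

/-- The angle `θ_k = (−1)^k · 2π/3`. -/
noncomputable def apollonianTheta (k : ℕ) : ℝ := (-1) ^ k * (2 * Real.pi / 3)

/-- The angle `θ'_k = 2πk/3`. -/
noncomputable def apollonianTheta' (k : ℕ) : ℝ := 2 * Real.pi * k / 3

/-- The Apollonian generator `φ_{k,n} = R_{θ'_k} ∘ f^n ∘ R_{θ_k} ∘ f`. -/
noncomputable def apollonianPhi (k n : ℕ) (z : ℂ) : ℂ :=
  rot (apollonianTheta' k) (apollonianF^[n] (rot (apollonianTheta k) (apollonianF z)))

local notation "L" => Real.sqrt 3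

private lemma hL2 : (L : ℝ) ^ 2 = 3 := Real.sq_sqrt (by norm_num)
private lemma hL2c : ((L : ℝ) : ℂ) ^ 2 = 3 := by rw [← Complex.ofReal_pow, hL2]; norm_num
private lemma hLlb : (1.732 : ℝ) ≤ L := by
  rw [show (1.732:ℝ) = Real.sqrt (1.732^2) by rw [Real.sqrt_sq]; norm_num]
  exact Real.sqrt_le_sqrt (by norm_num)
private lemma hLub : (L:ℝ) ≤ 1.7321 := by
  rw [show (1.7321:ℝ) = Real.sqrt (1.7321^2) by rw [Real.sqrt_sq]; norm_num]
  exact Real.sqrt_le_sqrt (by norm_num)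

private lemma hasDerivAt_mobius (a b c d z : ℂ) (h : c*z+d ≠ 0) :
    HasDerivAt (fun z => (a*z+b)/(c*z+d)) ((a*d - b*c)/(c*z+d)^2) z := by
  have h1 : HasDerivAt (fun z : ℂ => a*z+b) a z := by
    simpa using ((hasDerivAt_id z).const_mul a).add_const b
  have h2 : HasDerivAt (fun z : ℂ => c*z+d) c z := by
    simpa using ((hasDerivAt_id z).const_mul c).add_const d
  have := h1.div h2 h
  exact this.congr_deriv (by ring)

private lemma denom_ne {z : ℂ} (hz : z.re < 1) : (-z + L + 1 : ℂ) ≠ 0 := by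
  intro h
  have := congrArg Complex.re h
  simp [Complex.add_re] at this
  nlinarith [hLlb]

private lemma mapsTo_halfplane {z : ℂ} (hz : z.re < 1) : (apollonianF z).re < 1 := by
  have hd := denom_ne hz
  have hns : 0 < Complex.normSq (-z + L + 1) := by
    simpa [Complex.normSq_pos] using hd
  rw [apollonianF, Complex.div_re, ← add_div, div_lt_one hns]
  simp [Complex.normSq_apply, Complex.add_re, Complex.add_im, Complex.mul_re, Complex.mul_im]
  nlinarith [hz, hLlb, hL2, sq_nonneg z.im,
    mul_pos (show (0:ℝ) < L + 1 - z.re by nlinarith [hLlb]) (sub_pos.2 hz),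
    mul_nonneg (show (0:ℝ) ≤ L - 1 by nlinarith [hLlb]) (sq_nonneg z.im)]

private lemma re_iter_lt (n : ℕ) {w : ℂ} (hw : w.re < 1) : (apollonianF^[n] w).re < 1 := by
  induction n with
  | zero => simpa using hw
  | succ n ih => rw [Function.iterate_succ_apply']; exact mapsTo_halfplane ih

private lemma denomN_ne (n : ℕ) {w : ℂ} (hw : w.re < 1) : (-(n:ℂ) * w + n + L) ≠ 0 := by
  intro h
  have := congrArg Complex.re h
  simp [Complex.add_re, Complex.mul_re] at this
  nlinarith [hLlb, Nat.cast_nonneg (α := ℝ) n]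

private lemma iter_formula (n : ℕ) {w : ℂ} (hw : w.re < 1) :
    apollonianF^[n] w = (((L:ℝ) - n) * w + n) / (-(n:ℂ) * w + n + L) := by
  induction n with
  | zero =>
    have : ((L:ℝ):ℂ) ≠ 0 := by
      intro h; rw [Complex.ofReal_eq_zero] at h; nlinarith [hLlb]
    simp [this]
  | succ n ih =>
    have hB := denomN_ne n hw
    have hB' := denomN_ne (n+1) hw
    have hmid : (-(apollonianF^[n] w) + L + 1 : ℂ) ≠ 0 := denom_ne (re_iter_lt n hw)
    rw [ih] at hmid
    rw [Function.iterate_succ_apply', ih, apollonianF]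
    rw [div_eq_div_iff hmid (by push_cast at hB' ⊢; exact hB')]
    have hB2 : (-(↑n * w) + ↑n + (L:ℂ) ≠ 0) := by rw [← neg_mul]; exact hB
    have hX := div_mul_cancel₀ (((L:ℂ) - n) * w + n) hB
    push_cast
    linear_combination (L:ℂ) * hX

private lemma key_core (s t : ℝ) (hs0 : 0 ≤ s) (hsr : s ≤ 21 - 12*L)
    (hCS : t^2 ≤ (132 - 72*L)*s) : 25/32 ≤ (33 - 18*L) + s + t := by
  have hT : 0 ≤ (33 - 18*L) + s - 25/32 := by nlinarith [hLub]
  have hid : ((33 - 18*L) + s - 25/32)^2 - (132-72*L)*s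
      = (s-(21-12*L))^2 + (409/16 - 12*L)*((21-12*L)-s) + (172273/1024 - (777/8)*L) := by
    linear_combination (36:ℝ) * hL2
  have h2 : (0:ℝ) ≤ (409/16 - 12*L)*((21-12*L)-s) :=
    mul_nonneg (by nlinarith [hLub]) (by linarith)
  have h3 : (0:ℝ) ≤ 172273/1024 - (777/8)*L := by nlinarith [hLub]
  have hquad : (132-72*L)*s ≤ ((33 - 18*L) + s - 25/32)^2 := by
    nlinarith [sq_nonneg (s-(21-12*L))]
  nlinarith [sq_nonneg (t + ((33 - 18*L) + s - 25/32))]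

private lemma key_ineq (x y : ℝ) (h : (x-(4-2*L))^2 + y^2 ≤ (2*L-3)^2) :
    25/32 ≤ 1 + x + x^2 + y^2 - L*y := by
  have hsr : (x-(4-2*L))^2 + y^2 ≤ 21 - 12*L := by nlinarith [hL2]
  have hCS : ((9-4*L)*(x-(4-2*L)) + (-L)*y)^2
      ≤ (132 - 72*L)*((x-(4-2*L))^2 + y^2) := by
    nlinarith [sq_nonneg ((-L)*(x-(4-2*L)) - (9-4*L)*y), hL2]
  have := key_core ((x-(4-2*L))^2 + y^2) ((9-4*L)*(x-(4-2*L)) + (-L)*y)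
    (by positivity) hsr hCS
  nlinarith [this, hL2]

private lemma denom_ne' {z : ℂ} (hz : ‖z‖ ≤ 1) : (-z + L + 1 : ℂ) ≠ 0 := by
  intro h
  have := congrArg Complex.re h
  simp [Complex.add_re] at this
  nlinarith [hLlb, Complex.re_le_norm z, hz]

private lemma G1 {z : ℂ} (hz : ‖z‖ ≤ 1) :
    ‖(1+(L:ℂ))*z - 1‖ ≤ ‖-z + L + 1‖ := by
  have hns : Complex.normSq z ≤ 1 := by
    rw [← Complex.sq_norm]; nlinarith [norm_nonneg z]
  rw [Complex.norm_def, Complex.norm_def]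
  apply Real.sqrt_le_sqrt
  simp only [Complex.normSq_apply, Complex.mul_re, Complex.mul_im, Complex.add_re,
    Complex.add_im, Complex.sub_re, Complex.sub_im, Complex.neg_re, Complex.neg_im,
    Complex.one_re, Complex.one_im, Complex.ofReal_re, Complex.ofReal_im] at hns ⊢
  nlinarith [hL2, hLlb, hns]

private lemma disk_lemma {z : ℂ} (hz : ‖z‖ ≤ 1) :
    ‖apollonianF z - ((4:ℂ) - 2*L)‖ ≤ 2*L - 3 := by
  have hD := denom_ne' hz
  have h2L : ((2:ℂ)+L) ≠ 0 := by
    intro h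
    have := congrArg Complex.re h
    simp at this
    nlinarith [hLlb]
  have heq : apollonianF z - ((4:ℂ) - 2*L)
      = ((L:ℂ)*((1+(L:ℂ))*z - 1))/(((2:ℂ)+L)*(-z+L+1)) := by
    rw [apollonianF]
    field_simp
    linear_combination (2 + 2*((L:ℝ):ℂ) - 2*z) * hL2c
  rw [heq, norm_div, norm_mul, norm_mul]
  have ha1 : ‖((L:ℂ))‖ = L := by
    rw [Complex.norm_real, Real.norm_eq_abs, _root_.abs_of_nonneg (by nlinarith [hLlb])]
  have ha2 : ‖((2:ℂ)+L)‖ = 2 + L := by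
    rw [show ((2:ℂ)+L) = (((2+L : ℝ)):ℂ) by push_cast; ring, Complex.norm_real, Real.norm_eq_abs,
      _root_.abs_of_nonneg (by nlinarith [hLlb])]
  rw [ha1, ha2]
  have hDpos : 0 < ‖-z + L + 1‖ := norm_pos_iff.mpr hD
  rw [div_le_iff₀ (by positivity)]
  have h1 := G1 hz
  nlinarith [hL2, hLlb, hLub, mul_le_mul_of_nonneg_left h1 (show (0:ℝ) ≤ L by nlinarith [hLlb]),
    hDpos]

private lemma f_abs_le {z : ℂ} (hz : ‖z‖ ≤ 1) : ‖apollonianF z‖ ≤ 1 := by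
  have h := disk_lemma hz
  have h2 : ‖apollonianF z‖ ≤ ‖apollonianF z - ((4:ℂ) - 2*L)‖
      + ‖(4:ℂ) - 2*L‖ := by
    simpa using norm_add_le (apollonianF z - ((4:ℂ) - 2*L)) ((4:ℂ) - 2*L)
  have ha : ‖(4:ℂ) - 2*L‖ = 4 - 2*L := by
    rw [show ((4:ℂ)-2*L) = (((4-2*L : ℝ)):ℂ) by push_cast; ring, Complex.norm_real, Real.norm_eq_abs,
      _root_.abs_of_nonneg (by nlinarith [hLub])]
  rw [ha] at h2
  linarith


set_option maxHeartbeats 1000000 in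
/-- For `k ∈ {1,…,6}`, `n ≥ 1` and `|z| ≤ 1`, the map `φ_{k,n}` is holomorphic at `z` and
`|φ_{k,n}′(z)| ≤ 3 × 1.28/n² = 3.84/n²`. -/
theorem apollonianPhi_deriv_bound (k n : ℕ) (hk1 : 1 ≤ k) (hk6 : k ≤ 6) (hn : 1 ≤ n)
    (z : ℂ) (hz : ‖z‖ ≤ 1) :
    DifferentiableAt ℂ (apollonianPhi k n) z ∧
      ‖deriv (apollonianPhi k n) z‖ ≤ 3.84 / (n : ℝ) ^ 2 := by
  have hD : (-z + L + 1 : ℂ) ≠ 0 := denom_ne' hz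
  set e1 : ℂ := Complex.exp ((apollonianTheta k : ℝ) * I) with he1
  set e2 : ℂ := Complex.exp ((apollonianTheta' k : ℝ) * I) with he2
  set u : ℂ := apollonianF z with hu
  set w : ℂ := e1 * u with hw
  have hu1 : ‖u‖ ≤ 1 := f_abs_le hz
  have hwabs : ‖w‖ ≤ 1 := by
    rw [hw, norm_mul, he1, Complex.norm_exp_ofReal_mul_I, one_mul]; exact hu1
  -- components of e1
  have hcos : Real.cos (apollonianTheta k) = -(1/2) := by
    rw [apollonianTheta]
    rcases Nat.even_or_odd k with hk | hk
    · rw [hk.neg_one_pow, one_mul, show 2*Real.pi/3 = Real.pi - Real.pi/3 by ring,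
        Real.cos_pi_sub, Real.cos_pi_div_three]
    · rw [hk.neg_one_pow, neg_one_mul, Real.cos_neg,
        show 2*Real.pi/3 = Real.pi - Real.pi/3 by ring,
        Real.cos_pi_sub, Real.cos_pi_div_three]
  have hsin : Real.sin (apollonianTheta k) = (-1:ℝ)^k * (L/2) := by
    rw [apollonianTheta]
    rcases Nat.even_or_odd k with hk | hk
    · rw [hk.neg_one_pow, one_mul, show 2*Real.pi/3 = Real.pi - Real.pi/3 by ring,
        Real.sin_pi_sub, Real.sin_pi_div_three]
      ring
    · rw [hk.neg_one_pow, neg_one_mul, Real.sin_neg,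
        show 2*Real.pi/3 = Real.pi - Real.pi/3 by ring,
        Real.sin_pi_sub, Real.sin_pi_div_three]
      ring
  have he1re : e1.re = -(1/2) := by
    rw [he1, Complex.exp_ofReal_mul_I_re, hcos]
  have he1im : e1.im = (-1:ℝ)^k * (L/2) := by
    rw [he1, Complex.exp_ofReal_mul_I_im, hsin]
  -- disk constraint on u
  have hconstr : (u.re - (4-2*L))^2 + u.im^2 ≤ (2*L-3)^2 := by
    have h2 : Complex.normSq (u - ((4:ℂ) - 2*L)) ≤ (2*L-3)^2 := by
      rw [← Complex.sq_norm]
      exact pow_le_pow_left₀ (norm_nonneg _) (disk_lemma hz) 2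
    simp only [Complex.normSq_apply, Complex.sub_re, Complex.sub_im, Complex.mul_re,
      Complex.mul_im, Complex.re_ofNat, Complex.im_ofNat, Complex.ofReal_re,
      Complex.ofReal_im] at h2
    nlinarith [h2]
  have hwre : w.re = -(1/2)*u.re - ((-1:ℝ)^k*(L/2))*u.im := by
    rw [hw]
    simp only [Complex.mul_re, he1re, he1im]
    all_goals ring
  have hwim : w.im = -(1/2)*u.im + ((-1:ℝ)^k*(L/2))*u.re := by
    rw [hw]
    simp only [Complex.mul_im, he1re, he1im]
    all_goals ring
  -- key lower bound
  have hkey : 25/32 ≤ (1 - w.re)^2 + w.im^2 := by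
    rcases neg_one_pow_eq_or ℝ k with hk | hk
    · have h := key_ineq u.re (-u.im) (by nlinarith [hconstr])
      have hex : (1 - w.re)^2 + w.im^2
          = 1 + u.re + u.re^2 + u.im^2 + L*u.im := by
        rw [hwre, hwim, hk]; linear_combination ((u.re^2+u.im^2)/4) * hL2
      rw [hex]; nlinarith [h]
    · have h := key_ineq u.re u.im hconstr
      have hex : (1 - w.re)^2 + w.im^2
          = 1 + u.re + u.re^2 + u.im^2 - L*u.im := by
        rw [hwre, hwim, hk]; linear_combination ((u.re^2+u.im^2)/4) * hL2
      rw [hex]; nlinarith [h]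
  have hwre1 : w.re < 1 := by
    have hnsw : Complex.normSq w ≤ 1 := by
      rw [← Complex.sq_norm]; nlinarith [norm_nonneg w]
    rw [Complex.normSq_apply] at hnsw
    nlinarith [hkey, hnsw]
  -- the iterate denominator
  have hBre : (-(n:ℂ) * w + n + L).re = (n:ℝ)*(1-w.re) + L := by
    simp only [Complex.add_re, Complex.mul_re, Complex.neg_re, Complex.neg_im,
      Complex.natCast_re, Complex.natCast_im, Complex.ofReal_re, Complex.ofReal_im]
    all_goals ring
  have hBim : (-(n:ℂ) * w + n + L).im = -((n:ℝ)*w.im) := by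
    simp only [Complex.add_im, Complex.mul_im, Complex.neg_re, Complex.neg_im,
      Complex.natCast_re, Complex.natCast_im, Complex.ofReal_re, Complex.ofReal_im]
    all_goals ring
  have hn1 : (1:ℝ) ≤ (n:ℝ) := by exact_mod_cast hn
  have hBnlb : 25/32 * (n:ℝ)^2 ≤ Complex.normSq (-(n:ℂ) * w + n + L) := by
    rw [Complex.normSq_apply, hBre, hBim]
    nlinarith [hkey, hwre1, hLlb, hn1,
      mul_le_mul_of_nonneg_left hkey (sq_nonneg (n:ℝ)),
      mul_nonneg (mul_nonneg (by linarith : (0:ℝ) ≤ (n:ℝ)) (by nlinarith [hLlb] : (0:ℝ) ≤ L))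
        (by linarith : (0:ℝ) ≤ 1 - w.re), hL2]
  have hBnne : (-(n:ℂ) * w + n + L) ≠ 0 := by
    rw [← Complex.normSq_pos]; nlinarith [hBnlb, hn1]
  -- derivative of f at z
  have hf' : HasDerivAt apollonianF (3 / (-z + L + 1)^2) z := by
    have h0 : (-1:ℂ)*z + ((L:ℂ)+1) ≠ 0 := by
      rw [show (-1:ℂ)*z + ((L:ℂ)+1) = -z + L + 1 by ring]; exact hD
    have h := hasDerivAt_mobius ((L:ℂ)-1) 1 (-1) ((L:ℂ)+1) z h0
    have e : (fun t : ℂ => (((L:ℂ)-1)*t+1)/((-1)*t+((L:ℂ)+1))) = apollonianF := by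
      funext t; rw [apollonianF]; ring_nf
    rw [e, show (((L:ℂ))-1)*(((L:ℂ))+1) - 1*(-1) = 3 by linear_combination hL2c,
      show ((-1:ℂ))*z+(((L:ℂ))+1) = -z + L + 1 by ring] at h
    exact h
  have hg' : HasDerivAt (fun x => e1 * apollonianF x) (e1 * (3 / (-z + L + 1)^2)) z :=
    hf'.const_mul e1
  -- derivative of the iterate at w
  have hiter : HasDerivAt (apollonianF^[n]) (3 / (-(n:ℂ) * w + n + L)^2) w := by
    have hBdenom : -(n:ℂ)*w + ((n:ℂ)+L) ≠ 0 := by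
      rw [show -(n:ℂ)*w + ((n:ℂ)+L) = -(n:ℂ) * w + n + L by ring]; exact hBnne
    have hmob := hasDerivAt_mobius ((L:ℂ)-n) n (-(n:ℂ)) ((n:ℂ)+L) w hBdenom
    have heq : apollonianF^[n] =ᶠ[nhds w]
        (fun x => (((L:ℂ)-n)*x+n)/(-(n:ℂ)*x+((n:ℂ)+L))) := by
      have hopen : IsOpen {x : ℂ | x.re < 1} := isOpen_lt Complex.continuous_re continuous_const
      filter_upwards [hopen.mem_nhds hwre1] with x hx
      rw [iter_formula n hx]; ring_nf
    have h := hmob.congr_of_eventuallyEq heq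
    rw [show (((L:ℂ)-n)*((n:ℂ)+L) - (n:ℂ)*(-(n:ℂ))) = 3 by linear_combination hL2c,
      show -(n:ℂ)*w + ((n:ℂ)+L) = -(n:ℂ) * w + n + L by ring] at h
    exact h
  -- composition
  have hcomp : HasDerivAt (fun x => apollonianF^[n] (e1 * apollonianF x))
      ((3 / (-(n:ℂ) * w + n + L)^2) * (e1 * (3 / (-z + L + 1)^2))) z := by
    have := hiter.comp z hg'
    exact this
  have hfun : apollonianPhi k n = fun x => e2 * (apollonianF^[n] (e1 * apollonianF x)) := by
    funext x; rw [apollonianPhi, rot, rot, he1, he2]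
  have hphi : HasDerivAt (apollonianPhi k n)
      (e2 * ((3 / (-(n:ℂ) * w + n + L)^2) * (e1 * (3 / (-z + L + 1)^2)))) z := by
    rw [hfun]; exact hcomp.const_mul e2
  refine ⟨hphi.differentiableAt, ?_⟩
  rw [hphi.deriv]
  have hD2 : 3 ≤ Complex.normSq (-z + L + 1) := by
    rw [Complex.normSq_apply]
    simp only [Complex.add_re, Complex.add_im, Complex.neg_re, Complex.neg_im,
      Complex.ofReal_re, Complex.ofReal_im, Complex.one_re, Complex.one_im]
    nlinarith [hL2, hLlb, Complex.re_le_norm z, hz, sq_nonneg z.im, sq_nonneg (L + 1 - z.re)]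
  have habs : ‖e2 * ((3 / (-(n:ℂ) * w + n + L)^2) * (e1 * (3 / (-z + L + 1)^2)))‖
      = 3 / Complex.normSq (-(n:ℂ) * w + n + L) * (3 / Complex.normSq (-z + L + 1)) := by
    rw [norm_mul, norm_mul, norm_mul, norm_div, norm_div, norm_pow, norm_pow,
      he1, he2, Complex.norm_exp_ofReal_mul_I, Complex.norm_exp_ofReal_mul_I, Complex.sq_norm, Complex.sq_norm]
    norm_num
  rw [habs]
  have hp1 : (0:ℝ) < 25/32*(n:ℝ)^2 := by positivity
  have hstep : 3 / Complex.normSq (-(n:ℂ) * w + n + L) * (3 / Complex.normSq (-z + L + 1))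
      ≤ 3 / (25/32*(n:ℝ)^2) * (3 / 3) := by
    gcongr
    all_goals first | exact hBnlb | exact hD2 | positivity
  refine hstep.trans (le_of_eq ?_)
  rw [show (3.84:ℝ) = 96/25 by norm_num]
  field_simp
  ring
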